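/- Let k ≥ 2, d ≥ 1, and let S be a training set with each ‖x_i‖_∞ ≤ 1 and training loss L. Let F, F̄ ⊆ {1,…,d} with F̄ ∖ F ≠ ∅. Suppose W minimizes L over {V : supp(V) ⊆ F} and W★ minimizes L over {V : supp(V) ⊆ F̄} (both minimizers assumed to exist), and suppose L(W) > L(W★). Let j be any index maximizing ‖∇_i L(W)‖_1 over i ∈ {1,…,d}. Then there exists u ∈ ℝ^k such that L(W + u e_jᵀ) ≤ L(W) − (L(W) − L(W★))² / (4 (Σ_{i ∈ F̄∖F} ‖W★_{·,i}‖_∞)²). -/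

import Mathlib

open scoped BigOperators

noncomputable section

/-- The multiclass logistic loss for label `y`. -/
def mcLoss (k : ℕ) (y : Fin k) (v : Fin k → ℝ) : ℝ :=
  Real.log (∑ y' : Fin k, Real.exp ((if y' ≠ y then (1 : ℝ) else 0) - v y + v y'))

/-- The average training loss of the matrix `W` (viewed as `Fin k → Fin d → ℝ`). -/
def trainLoss (k d m : ℕ) (x : Fin m → Fin d → ℝ) (y : Fin m → Fin k)
    (W : Fin k → Fin d → ℝ) : ℝ :=
  (1 / (m : ℝ)) * ∑ i : Fin m, mcLoss k (y i) (fun q => ∑ j : Fin d, W q j * x i j)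

/-- The `r`-th column of the gradient matrix of `L` at `W`. -/
def gradCol (k d : ℕ) (L : (Fin k → Fin d → ℝ) → ℝ) (W : Fin k → Fin d → ℝ)
    (r : Fin d) : Fin k → ℝ :=
  fun q => fderiv ℝ L W (fun q' j' => if q' = q ∧ j' = r then (1 : ℝ) else 0)

def lseZ {k : ℕ} (a b : Fin k → ℝ) (t : ℝ) : ℝ := ∑ y', Real.exp (a y' + t * b y')
def lseS {k : ℕ} (a b : Fin k → ℝ) (t : ℝ) : ℝ := ∑ y', b y' * Real.exp (a y' + t * b y')
def lseT {k : ℕ} (a b : Fin k → ℝ) (t : ℝ) : ℝ := ∑ y', (b y')^2 * Real.exp (a y' + t * b y')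
def lse {k : ℕ} (a b : Fin k → ℝ) (t : ℝ) : ℝ := Real.log (lseZ a b t)
def dlse {k : ℕ} (a b : Fin k → ℝ) (t : ℝ) : ℝ := lseS a b t / lseZ a b t
def d2lse {k : ℕ} (a b : Fin k → ℝ) (t : ℝ) : ℝ :=
  (lseT a b t * lseZ a b t - lseS a b t ^ 2) / (lseZ a b t) ^ 2

section lse1
variable {k : ℕ} (a b : Fin k → ℝ) (t : ℝ)

lemma lseZ_pos (hk : 0 < k) : 0 < lseZ a b t := by
  have : Nonempty (Fin k) := ⟨⟨0, hk⟩⟩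
  exact Finset.sum_pos (fun y' _ => Real.exp_pos _) Finset.univ_nonempty

lemma hasDerivAt_affine (c e : ℝ) : HasDerivAt (fun t : ℝ => c + t * e) e t := by
  simpa using ((hasDerivAt_mul_const e).const_add c)

lemma hasDerivAt_lseZ : HasDerivAt (lseZ a b) (lseS a b t) t := by
  apply HasDerivAt.fun_sum
  intro y' _
  have h := (hasDerivAt_affine t (a y') (b y')).exp
  simpa [mul_comm] using h

lemma hasDerivAt_lseS : HasDerivAt (lseS a b) (lseT a b t) t := by
  apply HasDerivAt.fun_sum
  intro y' _
  have h := ((hasDerivAt_affine t (a y') (b y')).exp).const_mul (b y')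
  exact h.congr_deriv (by ring)

lemma hasDerivAt_lse (hk : 0 < k) : HasDerivAt (lse a b) (dlse a b t) t :=
  (hasDerivAt_lseZ a b t).log (ne_of_gt (lseZ_pos a b t hk))

lemma hasDerivAt_dlse (hk : 0 < k) : HasDerivAt (dlse a b) (d2lse a b t) t := by
  have h := (hasDerivAt_lseS a b t).div (hasDerivAt_lseZ a b t) (ne_of_gt (lseZ_pos a b t hk))
  have e : d2lse a b t = (lseT a b t * lseZ a b t - lseS a b t * lseS a b t) / lseZ a b t ^ 2 := by
    unfold d2lse; ring
  rw [e]; exact h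

lemma d2lse_nonneg (hk : 0 < k) : 0 ≤ d2lse a b t := by
  have hZ := lseZ_pos a b t hk
  apply div_nonneg _ (sq_nonneg _)
  have hcs := Finset.sum_mul_sq_le_sq_mul_sq Finset.univ
    (fun y' => b y' * Real.sqrt (Real.exp (a y' + t * b y')))
    (fun y' => Real.sqrt (Real.exp (a y' + t * b y')))
  have h1 : ∀ y' : Fin k, b y' * Real.sqrt (Real.exp (a y' + t * b y')) *
      Real.sqrt (Real.exp (a y' + t * b y')) = b y' * Real.exp (a y' + t * b y') := by
    intro y'
    rw [mul_assoc, Real.mul_self_sqrt (Real.exp_pos _).le]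
  have h2 : ∀ y' : Fin k, (b y' * Real.sqrt (Real.exp (a y' + t * b y')))^2 =
      (b y')^2 * Real.exp (a y' + t * b y') := by
    intro y'
    rw [mul_pow, Real.sq_sqrt (Real.exp_pos _).le]
  have h3 : ∀ y' : Fin k, (Real.sqrt (Real.exp (a y' + t * b y')))^2 =
      Real.exp (a y' + t * b y') := fun y' => Real.sq_sqrt (Real.exp_pos _).le
  simp only [h1, h2, h3] at hcs
  have : lseS a b t ^ 2 ≤ lseT a b t * lseZ a b t := by
    simpa [lseS, lseT, lseZ] using hcs
  linarith

lemma d2lse_le (hk : 0 < k) (μ c : ℝ) (hb : ∀ y', |b y' - μ| ≤ c) :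
    d2lse a b t ≤ c ^ 2 := by
  have hZ := lseZ_pos a b t hk
  have key : lseT a b t * lseZ a b t - lseS a b t ^ 2 =
      (∑ y', (b y' - μ)^2 * Real.exp (a y' + t * b y')) * lseZ a b t
        - (lseS a b t - μ * lseZ a b t)^2 := by
    have : (∑ y', (b y' - μ)^2 * Real.exp (a y' + t * b y')) =
        lseT a b t - 2 * μ * lseS a b t + μ^2 * lseZ a b t := by
      simp only [lseT, lseS, lseZ, Finset.mul_sum, ← Finset.sum_sub_distrib,
        ← Finset.sum_add_distrib]
      apply Finset.sum_congr rfl; intro y' _; ring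
    rw [this]; ring
  have hT : (∑ y', (b y' - μ)^2 * Real.exp (a y' + t * b y')) ≤ c^2 * lseZ a b t := by
    rw [lseZ, Finset.mul_sum]
    apply Finset.sum_le_sum
    intro y' _
    have := hb y'
    have h2 : (b y' - μ)^2 ≤ c^2 := by
      have := abs_nonneg (b y' - μ)
      nlinarith [sq_abs (b y' - μ)]
    exact mul_le_mul_of_nonneg_right h2 (Real.exp_pos _).le
  rw [d2lse, div_le_iff₀ (by positivity), key]
  nlinarith [sq_nonneg (lseS a b t - μ * lseZ a b t), mul_le_mul_of_nonneg_right hT hZ.le]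

end lse1

def aaF {k d m : ℕ} (x : Fin m → Fin d → ℝ) (y : Fin m → Fin k)
    (W : Fin k → Fin d → ℝ) (i : Fin m) : Fin k → ℝ :=
  fun y' => (if y' ≠ y i then (1:ℝ) else 0) - (∑ j, W (y i) j * x i j) + ∑ j, W y' j * x i j

def bbF {k d m : ℕ} (x : Fin m → Fin d → ℝ) (y : Fin m → Fin k)
    (V : Fin k → Fin d → ℝ) (i : Fin m) : Fin k → ℝ :=
  fun y' => -(∑ j, V (y i) j * x i j) + ∑ j, V y' j * x i j

def phiF {k d m : ℕ} (x : Fin m → Fin d → ℝ) (y : Fin m → Fin k)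
    (W V : Fin k → Fin d → ℝ) (t : ℝ) : ℝ :=
  (1 / (m : ℝ)) * ∑ i, dlse (aaF x y W i) (bbF x y V i) t

def phiF' {k d m : ℕ} (x : Fin m → Fin d → ℝ) (y : Fin m → Fin k)
    (W V : Fin k → Fin d → ℝ) (t : ℝ) : ℝ :=
  (1 / (m : ℝ)) * ∑ i, d2lse (aaF x y W i) (bbF x y V i) t

section deriv
variable {k d m : ℕ} (x : Fin m → Fin d → ℝ) (y : Fin m → Fin k)
  (W V : Fin k → Fin d → ℝ) (t : ℝ)

lemma trainLoss_line :
    trainLoss k d m x y (fun q i' => W q i' + t * V q i') =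
      (1 / (m : ℝ)) * ∑ i, lse (aaF x y W i) (bbF x y V i) t := by
  unfold trainLoss mcLoss lse lseZ aaF bbF
  congr 1
  apply Finset.sum_congr rfl
  intro i _
  congr 1
  apply Finset.sum_congr rfl
  intro y' _
  congr 1
  simp only [add_mul, Finset.sum_add_distrib]
  have h : ∀ q : Fin k, (∑ j, t * V q j * x i j) = t * ∑ j, V q j * x i j := by
    intro q; rw [Finset.mul_sum]; apply Finset.sum_congr rfl; intro j _; ring
  rw [h, h]
  ring

lemma trainLoss_differentiable (hk : 0 < k) :
    Differentiable ℝ (trainLoss k d m x y) := by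
  unfold trainLoss mcLoss
  apply Differentiable.const_mul
  apply Differentiable.fun_sum
  intro i _
  have hsum : ∀ q : Fin k, Differentiable ℝ (fun W : Fin k → Fin d → ℝ =>
      ∑ j : Fin d, W q j * x i j) := by
    intro q
    apply Differentiable.fun_sum
    intro j _
    exact ((((ContinuousLinearMap.proj j : (Fin d → ℝ) →L[ℝ] ℝ).comp
      (ContinuousLinearMap.proj q : (Fin k → Fin d → ℝ) →L[ℝ] (Fin d → ℝ)))).differentiable).mul_const _
  have hin : Differentiable ℝ (fun W : Fin k → Fin d → ℝ =>
      ∑ y' : Fin k, Real.exp ((if y' ≠ y i then (1:ℝ) else 0)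
        - (∑ j, W (y i) j * x i j) + ∑ j, W y' j * x i j)) := by
    apply Differentiable.fun_sum
    intro y' _
    apply Real.differentiable_exp.comp
    exact (Differentiable.const_sub (hsum (y i)) _).add (hsum y')
  intro W
  have hpos : (0:ℝ) < ∑ y' : Fin k, Real.exp ((if y' ≠ y i then (1:ℝ) else 0)
      - (∑ j, W (y i) j * x i j) + ∑ j, W y' j * x i j) := by
    have : Nonempty (Fin k) := ⟨⟨0, hk⟩⟩
    exact Finset.sum_pos (fun y' _ => Real.exp_pos _) Finset.univ_nonempty
  exact DifferentiableAt.log (hin W) (ne_of_gt hpos)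

lemma hasDerivAt_line (hk : 0 < k) :
    HasDerivAt (fun t => trainLoss k d m x y (fun q i' => W q i' + t * V q i'))
      (phiF x y W V t) t := by
  have hfe : (fun t => trainLoss k d m x y (fun q i' => W q i' + t * V q i')) =
      fun t => (1 / (m : ℝ)) * ∑ i, lse (aaF x y W i) (bbF x y V i) t := by
    funext t; exact trainLoss_line x y W V t
  rw [hfe]
  exact (HasDerivAt.fun_sum (fun i _ => hasDerivAt_lse _ _ t hk)).const_mul _

lemma hasDerivAt_phiF (hk : 0 < k) :
    HasDerivAt (phiF x y W V) (phiF' x y W V t) t :=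
  (HasDerivAt.fun_sum (fun i _ => hasDerivAt_dlse _ _ t hk)).const_mul _

lemma fderiv_line (hk : 0 < k) :
    fderiv ℝ (trainLoss k d m x y) (fun q i' => W q i' + t * V q i') V = phiF x y W V t := by
  have hline : HasDerivAt (fun s : ℝ => (fun q i' => W q i' + s * V q i') :
      ℝ → (Fin k → Fin d → ℝ)) V t := by
    have h : HasDerivAt (fun s : ℝ => W + s • V) V t := by
      simpa using ((hasDerivAt_id t).smul_const V).const_add W
    have he : (fun s : ℝ => (fun q i' => W q i' + s * V q i') : ℝ → (Fin k → Fin d → ℝ)) =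
        fun s : ℝ => W + s • V := by
      funext s q i'
      simp [Pi.add_apply, Pi.smul_apply, smul_eq_mul]
    rw [he]
    exact h
  have hL := ((trainLoss_differentiable x y hk) _).hasFDerivAt.comp_hasDerivAt t hline
  exact HasDerivAt.unique hL (hasDerivAt_line x y W V t hk)

lemma fderiv_at_W (hk : 0 < k) :
    fderiv ℝ (trainLoss k d m x y) W V = phiF x y W V 0 := by
  have h := fderiv_line x y W V 0 hk
  simpa using h

lemma matrix_decomp : V = ∑ q : Fin k, ∑ r : Fin d,
    V q r • (fun q' j' => if q' = q ∧ j' = r then (1:ℝ) else 0 : Fin k → Fin d → ℝ) := by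
  funext q' j'
  simp only [Finset.sum_apply, Pi.smul_apply, smul_eq_mul]
  rw [Finset.sum_eq_single q']
  · rw [Finset.sum_eq_single j']
    · simp
    · intro r _ hr; simp [Ne.symm hr]
    · simp
  · intro q _ hq
    apply Finset.sum_eq_zero
    intro r _
    simp [Ne.symm hq]
  · simp

lemma fderiv_expand (hk : 0 < k) :
    fderiv ℝ (trainLoss k d m x y) W V =
      ∑ r : Fin d, ∑ q : Fin k, V q r * gradCol k d (trainLoss k d m x y) W r q := by
  conv_lhs => rw [matrix_decomp V]
  rw [map_sum, Finset.sum_comm]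
  apply Finset.sum_congr rfl
  intro r _
  rw [map_sum]
  apply Finset.sum_congr rfl
  intro q _
  rw [map_smul]
  rfl

end deriv

section bounds
variable {k d m : ℕ} (x : Fin m → Fin d → ℝ) (y : Fin m → Fin k)
  (W V : Fin k → Fin d → ℝ)

lemma lineFun_zero : (fun q i' => W q i' + (0:ℝ) * V q i') = W := by
  funext q i'; simp

lemma lineFun_one : (fun q i' => W q i' + (1:ℝ) * V q i') = fun q i' => W q i' + V q i' := by
  funext q i'; simp

lemma phiF_monotone (hk : 0 < k) : Monotone (phiF x y W V) := by
  apply monotone_of_deriv_nonneg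
  · exact fun t => (hasDerivAt_phiF x y W V t hk).differentiableAt
  · intro t
    rw [(hasDerivAt_phiF x y W V t hk).deriv]
    unfold phiF'
    apply mul_nonneg (by positivity)
    exact Finset.sum_nonneg (fun i _ => d2lse_nonneg _ _ t hk)

lemma convexity_bound (hk : 0 < k) :
    trainLoss k d m x y W + fderiv ℝ (trainLoss k d m x y) W V ≤
      trainLoss k d m x y (fun q i' => W q i' + V q i') := by
  set g := fun t => trainLoss k d m x y (fun q i' => W q i' + t * V q i') with hg
  have hcont : ContinuousOn g (Set.Icc (0:ℝ) 1) :=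
    Continuous.continuousOn (continuous_iff_continuousAt.2
      (fun t => (hasDerivAt_line x y W V t hk).continuousAt))
  obtain ⟨c, hc, hceq⟩ := exists_hasDerivAt_eq_slope g (phiF x y W V) one_pos hcont
    (fun t _ => hasDerivAt_line x y W V t hk)
  have h0 : phiF x y W V 0 ≤ phiF x y W V c := phiF_monotone x y W V hk hc.1.le
  rw [fderiv_at_W x y W V hk]
  have hg1 : g 1 = trainLoss k d m x y (fun q i' => W q i' + V q i') := by
    rw [hg]; simp only [lineFun_one]
  have hg0 : g 0 = trainLoss k d m x y W := by
    rw [hg]; simp only [lineFun_zero]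
  rw [hceq, hg1, hg0] at h0
  simp at h0
  linarith

lemma smooth_bound (hk : 0 < k) (hm : 0 < m) (μ : Fin m → ℝ) (c : ℝ)
    (hb : ∀ i y', |bbF x y V i y' - μ i| ≤ c) :
    trainLoss k d m x y (fun q i' => W q i' + V q i') ≤
      trainLoss k d m x y W + phiF x y W V 0 + c ^ 2 := by
  have hphi' : ∀ t, phiF' x y W V t ≤ c ^ 2 := by
    intro t
    unfold phiF'
    have hsum : (∑ i, d2lse (aaF x y W i) (bbF x y V i) t) ≤ (m : ℝ) * c ^ 2 := by
      calc (∑ i, d2lse (aaF x y W i) (bbF x y V i) t)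
          ≤ ∑ _i : Fin m, c ^ 2 :=
            Finset.sum_le_sum (fun i _ => d2lse_le _ _ t hk (μ i) c (hb i))
        _ = (m : ℝ) * c ^ 2 := by simp [mul_comm]
    have hmpos : (0:ℝ) < m := by exact_mod_cast hm
    calc (1 / (m:ℝ)) * ∑ i, d2lse (aaF x y W i) (bbF x y V i) t
        ≤ (1 / (m:ℝ)) * ((m:ℝ) * c ^ 2) := by
          apply mul_le_mul_of_nonneg_left hsum (by positivity)
      _ = c ^ 2 := by field_simp
  set g := fun t => trainLoss k d m x y (fun q i' => W q i' + t * V q i') with hg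
  have hcont : ContinuousOn g (Set.Icc (0:ℝ) 1) :=
    Continuous.continuousOn (continuous_iff_continuousAt.2
      (fun t => (hasDerivAt_line x y W V t hk).continuousAt))
  obtain ⟨c₁, hc₁, hceq⟩ := exists_hasDerivAt_eq_slope g (phiF x y W V) one_pos hcont
    (fun t _ => hasDerivAt_line x y W V t hk)
  have hcontφ : ContinuousOn (phiF x y W V) (Set.Icc (0:ℝ) c₁) :=
    Continuous.continuousOn (continuous_iff_continuousAt.2
      (fun t => (hasDerivAt_phiF x y W V t hk).continuousAt))
  obtain ⟨c₂, hc₂, hceq₂⟩ := exists_hasDerivAt_eq_slope (phiF x y W V) (phiF' x y W V)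
    hc₁.1 hcontφ (fun t _ => hasDerivAt_phiF x y W V t hk)
  -- phiF c₁ = phiF 0 + c₁ * phiF' c₂ ≤ phiF 0 + c²
  have h1 : phiF x y W V c₁ = phiF x y W V 0 + c₁ * phiF' x y W V c₂ := by
    rw [sub_zero, eq_div_iff (ne_of_gt hc₁.1)] at hceq₂
    linear_combination -hceq₂
  have hc2 : c₁ * phiF' x y W V c₂ ≤ c ^ 2 := by
    have h := hphi' c₂
    have h0 : 0 ≤ phiF' x y W V c₂ := by
      unfold phiF'
      apply mul_nonneg (by positivity)
      exact Finset.sum_nonneg (fun i _ => d2lse_nonneg _ _ c₂ hk)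
    nlinarith [hc₁.1, hc₁.2]
  have hg1 : g 1 = trainLoss k d m x y (fun q i' => W q i' + V q i') := by
    rw [hg]; simp only [lineFun_one]
  have hg0 : g 0 = trainLoss k d m x y W := by
    rw [hg]; simp only [lineFun_zero]
  rw [hg1, hg0] at hceq
  simp at hceq
  linarith

lemma grad_zero (hk : 0 < k) (F : Finset (Fin d))
    (hWsupp : ∀ i ∉ F, ∀ q, W q i = 0)
    (hWmin : ∀ V : Fin k → Fin d → ℝ, (∀ i ∉ F, ∀ q, V q i = 0) →
      trainLoss k d m x y W ≤ trainLoss k d m x y V)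
    (r : Fin d) (hr : r ∈ F) (q : Fin k) :
    gradCol k d (trainLoss k d m x y) W r q = 0 := by
  set E : Fin k → Fin d → ℝ := fun q' j' => if q' = q ∧ j' = r then (1:ℝ) else 0 with hE
  set g := fun t => trainLoss k d m x y (fun q' i' => W q' i' + t * E q' i') with hg
  have hmin : IsLocalMin g 0 := by
    apply Filter.Eventually.of_forall
    intro t
    have hsupp : ∀ i ∉ F, ∀ q', W q' i + t * E q' i = 0 := by
      intro i hi q'
      have h1 : W q' i = 0 := hWsupp i hi q'
      have h2 : E q' i = 0 := by
        rw [hE]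
        simp only [ite_eq_right_iff, and_imp]
        intro _ h; exact absurd (h ▸ hr) hi
      rw [h1, h2]; ring
    have := hWmin (fun q' i' => W q' i' + t * E q' i') hsupp
    have hg0 : g 0 = trainLoss k d m x y W := by rw [hg]; simp only [lineFun_zero]
    rw [hg0]
    exact this
  have hd := hasDerivAt_line x y W E 0 hk
  have hzero : phiF x y W E 0 = 0 := hmin.hasDerivAt_eq_zero hd
  show fderiv ℝ (trainLoss k d m x y) W E = 0
  rw [fderiv_at_W x y W E hk, hzero]

end bounds

lemma sign_helpers (t : ℝ) : |Real.sign t| ≤ 1 ∧ Real.sign t * t = |t| := by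
  rcases lt_trichotomy t 0 with h | h | h
  · rw [Real.sign_of_neg h, abs_of_neg h]; norm_num
  · subst h; simp
  · rw [Real.sign_of_pos h, abs_of_pos h]; norm_num


/-- **Lemma 3 (key progress lemma).** If `W` minimizes `L` over support `F`, `W★` minimizes
`L` over support `F̄` with `F̄ \ F ≠ ∅` and `L(W) > L(W★)`, and `j` maximizes the `ℓ₁` norm of
the gradient columns, then some update of column `j` decreases `L` by at least
`(L(W) - L(W★))² / (4 (∑_{i ∈ F̄ \ F} ‖W★_{·,i}‖_∞)²)`. -/
theorem shareBoost_key_lemma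
    (k d m : ℕ) (hk : 2 ≤ k) (hd : 1 ≤ d) (hm : 1 ≤ m)
    (x : Fin m → Fin d → ℝ) (y : Fin m → Fin k)
    (hx : ∀ i : Fin m, ‖x i‖ ≤ 1)
    (F Fbar : Finset (Fin d)) (hFF : (Fbar \ F).Nonempty)
    (W Wstar : Fin k → Fin d → ℝ)
    (hWsupp : ∀ i ∉ F, ∀ q, W q i = 0)
    (hWmin : ∀ V : Fin k → Fin d → ℝ, (∀ i ∉ F, ∀ q, V q i = 0) →
      trainLoss k d m x y W ≤ trainLoss k d m x y V)
    (hWstarSupp : ∀ i ∉ Fbar, ∀ q, Wstar q i = 0)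
    (hWstarMin : ∀ V : Fin k → Fin d → ℝ, (∀ i ∉ Fbar, ∀ q, V q i = 0) →
      trainLoss k d m x y Wstar ≤ trainLoss k d m x y V)
    (hLoss : trainLoss k d m x y Wstar < trainLoss k d m x y W)
    (j : Fin d)
    (hj : ∀ i : Fin d, ∑ q : Fin k, |gradCol k d (trainLoss k d m x y) W i q| ≤
      ∑ q : Fin k, |gradCol k d (trainLoss k d m x y) W j q|) :
    ∃ u : Fin k → ℝ,
      trainLoss k d m x y (fun q i => W q i + if i = j then u q else 0) ≤
        trainLoss k d m x y W -
          (trainLoss k d m x y W - trainLoss k d m x y Wstar) ^ 2 /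
            (4 * (∑ i ∈ Fbar \ F, ‖fun q => Wstar q i‖) ^ 2) := by
  have hk0 : 0 < k := by omega
  have hm0 : 0 < m := by omega
  set L := trainLoss k d m x y with hLdef
  set gc := gradCol k d L W with hgc
  set G := ∑ q, |gc j q| with hG
  set B := ∑ i ∈ Fbar \ F, ‖fun q => Wstar q i‖ with hB
  set Δ := L W - L Wstar with hΔdef
  have hΔpos : 0 < Δ := sub_pos.2 hLoss
  have hGnonneg : 0 ≤ G := Finset.sum_nonneg (fun q _ => abs_nonneg _)
  have hBnonneg : 0 ≤ B := Finset.sum_nonneg (fun i _ => norm_nonneg _)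
  -- Step A : Δ ≤ B * G
  have hA : Δ ≤ B * G := by
    set Vd : Fin k → Fin d → ℝ := fun q i' => Wstar q i' - W q i' with hVd
    have hconv := convexity_bound x y W Vd hk0
    have hWV : (fun q i' => W q i' + Vd q i') = Wstar := by
      funext q i'; rw [hVd]; ring
    rw [hWV] at hconv
    have hexp := fderiv_expand x y W Vd hk0
    -- gradient columns of F vanish
    have hgz : ∀ r ∈ F, ∀ q, gc r q = 0 := fun r hr q =>
      grad_zero x y W hk0 F hWsupp hWmin r hr q
    have hsub : (∑ r : Fin d, ∑ q, Vd q r * gc r q) =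
        ∑ r ∈ Fbar \ F, ∑ q, Vd q r * gc r q := by
      symm
      apply Finset.sum_subset (Finset.subset_univ _)
      intro r _ hr
      by_cases hrF : r ∈ F
      · apply Finset.sum_eq_zero; intro q _; rw [hgz r hrF q]; ring
      · have hrFbar : r ∉ Fbar := by
          intro hmem; exact hr (Finset.mem_sdiff.2 ⟨hmem, hrF⟩)
        apply Finset.sum_eq_zero; intro q _
        rw [hVd]
        simp only [hWsupp r hrF q, hWstarSupp r hrFbar q]
        ring
    have hcol : ∀ r ∈ Fbar \ F, -(∑ q, Vd q r * gc r q) ≤ ‖fun q => Wstar q r‖ * G := by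
      intro r hr
      have hrF : r ∉ F := (Finset.mem_sdiff.1 hr).2
      have h1 : -(∑ q, Vd q r * gc r q) = ∑ q, -(Wstar q r) * gc r q := by
        rw [← Finset.sum_neg_distrib]
        apply Finset.sum_congr rfl; intro q _
        rw [hVd]; simp only [hWsupp r hrF q]; ring
      rw [h1]
      calc (∑ q, -(Wstar q r) * gc r q)
          ≤ ∑ q, ‖fun q' => Wstar q' r‖ * |gc r q| := by
            apply Finset.sum_le_sum; intro q _
            calc -(Wstar q r) * gc r q ≤ |(-(Wstar q r)) * gc r q| := le_abs_self _
              _ = |Wstar q r| * |gc r q| := by rw [abs_mul, abs_neg]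
              _ ≤ ‖fun q' => Wstar q' r‖ * |gc r q| := by
                  apply mul_le_mul_of_nonneg_right _ (abs_nonneg _)
                  exact norm_le_pi_norm (fun q' => Wstar q' r) q
        _ = ‖fun q' => Wstar q' r‖ * ∑ q, |gc r q| := by rw [Finset.mul_sum]
        _ ≤ ‖fun q' => Wstar q' r‖ * G := by
            apply mul_le_mul_of_nonneg_left (hj r) (norm_nonneg _)
    calc Δ ≤ -(fderiv ℝ L W Vd) := by rw [hΔdef]; linarith
      _ = ∑ r ∈ Fbar \ F, -(∑ q, Vd q r * gc r q) := by
          rw [hexp, hsub, ← Finset.sum_neg_distrib]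
      _ ≤ ∑ r ∈ Fbar \ F, ‖fun q => Wstar q r‖ * G := Finset.sum_le_sum hcol
      _ = B * G := by rw [hB, Finset.sum_mul]
  have hBpos : 0 < B := by
    rcases hBnonneg.lt_or_eq with h | h
    · exact h
    · exfalso; rw [← h] at hA; simp at hA; linarith
  have hGpos : 0 < G := by
    rcases hGnonneg.lt_or_eq with h | h
    · exact h
    · exfalso; rw [← h] at hA; simp at hA; linarith
  -- Step B : gradient step on column j
  set u : Fin k → ℝ := fun q => -(G/2) * Real.sign (gc j q) with hu
  set Vu : Fin k → Fin d → ℝ := fun q i' => if i' = j then u q else 0 with hVu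
  have hbb : ∀ (i : Fin m) (y' : Fin k),
      bbF x y Vu i y' = -(u (y i) * x i j) + u y' * x i j := by
    intro i y'
    unfold bbF
    have hs : ∀ q : Fin k, (∑ j' : Fin d, Vu q j' * x i j') = u q * x i j := by
      intro q
      rw [hVu]
      simp only [ite_mul, zero_mul]
      rw [Finset.sum_ite_eq' Finset.univ j (fun j' => u q * x i j')]
      simp
    rw [hs, hs]
  have hb : ∀ (i : Fin m) (y' : Fin k),
      |bbF x y Vu i y' - (-(u (y i) * x i j))| ≤ G / 2 := by
    intro i y'
    rw [hbb i y']
    have h1 : |u y'| ≤ G / 2 := by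
      rw [hu]
      calc |-(G/2) * Real.sign (gc j y')| = (G/2) * |Real.sign (gc j y')| := by
            rw [abs_mul, abs_neg, abs_of_nonneg (by linarith)]
        _ ≤ (G/2) * 1 := mul_le_mul_of_nonneg_left (sign_helpers _).1 (by linarith)
        _ = G / 2 := mul_one _
    have h2 : |x i j| ≤ 1 := by
      calc |x i j| = ‖x i j‖ := rfl
        _ ≤ ‖x i‖ := norm_le_pi_norm (x i) j
        _ ≤ 1 := hx i
    calc |(-(u (y i) * x i j) + u y' * x i j) - (-(u (y i) * x i j))| = |u y' * x i j| := by
          congr 1; ring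
      _ = |u y'| * |x i j| := abs_mul _ _
      _ ≤ (G/2) * 1 := mul_le_mul h1 h2 (abs_nonneg _) (by linarith)
      _ = G / 2 := mul_one _
  have hsmooth := smooth_bound x y W Vu hk0 hm0 (fun i => -(u (y i) * x i j)) (G/2) hb
  -- phiF 0 = ∑_q u q * gc j q = -(G/2) * G
  have hphi0 : phiF x y W Vu 0 = -(G/2) * G := by
    rw [← fderiv_at_W x y W Vu hk0, fderiv_expand x y W Vu hk0]
    have hcollapse : (∑ r : Fin d, ∑ q, Vu q r * gradCol k d L W r q) =
        ∑ q, u q * gc j q := by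
      rw [Finset.sum_eq_single j]
      · apply Finset.sum_congr rfl; intro q _; rw [hVu]; simp; exact Or.inl rfl
      · intro r _ hr
        apply Finset.sum_eq_zero; intro q _
        rw [hVu]; simp [hr]
      · simp
    rw [hcollapse]
    have : ∀ q : Fin k, u q * gc j q = -(G/2) * |gc j q| := by
      intro q
      rw [hu]
      have := (sign_helpers (gc j q)).2
      calc -(G/2) * Real.sign (gc j q) * gc j q
          = -(G/2) * (Real.sign (gc j q) * gc j q) := by ring
        _ = -(G/2) * |gc j q| := by rw [this]
    rw [Finset.sum_congr rfl (fun q _ => this q), ← Finset.mul_sum, ← hG]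
  refine ⟨u, ?_⟩
  calc L (fun q i' => W q i' + Vu q i')
      ≤ L W + phiF x y W Vu 0 + (G/2)^2 := hsmooth
    _ = L W - G^2/4 := by rw [hphi0]; ring
    _ ≤ L W - Δ^2 / (4 * B^2) := by
        have hsq : Δ^2 ≤ (B*G)^2 := by nlinarith
        have : Δ^2 / (4 * B^2) ≤ (B*G)^2 / (4 * B^2) :=
          div_le_div_of_nonneg_right hsq (by positivity) |>.trans_eq rfl
        have heq : (B*G)^2 / (4 * B^2) = G^2/4 := by
          field_simp
        linarith [this, heq ▸ this]
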